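/- arXiv:1903.09069 — 5 statements merged into one kernel-verified Lean document; each statement's English description precedes it below -/
import Mathlib

section
/- Let A, R, Q, P, L, A_c be as in the Riccati/Lyapunov setup (P symmetric solving PA + AᵀP − PRP + Q = 0 with A_c = A − RP, L symmetric solving L A_cᵀ + A_c L = R, R ⪰ 0, Q ⪰ 0). If (Q, A) is detectable (i.e., for every eigenvector v of A with eigenvalue of nonnegative real part, Qv ≠ 0), then the matrix V := PL + I is nonsingular. -/
open Matrix Complex ComplexOrder

namespace Stmt3Aux

variable {n : ℕ}

noncomputable def cm (M : Matrix (Fin n) (Fin n) ℝ) : Matrix (Fin n) (Fin n) ℂ :=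
  M.map Complex.ofReal

lemma cm_mul (M N : Matrix (Fin n) (Fin n) ℝ) : cm (M * N) = cm M * cm N := by
  ext i j
  simp [cm, Matrix.mul_apply]

lemma cm_add (M N : Matrix (Fin n) (Fin n) ℝ) : cm (M + N) = cm M + cm N := by
  ext i j; simp [cm]

lemma cm_sub (M N : Matrix (Fin n) (Fin n) ℝ) : cm (M - N) = cm M - cm N := by
  ext i j; simp [cm]

lemma cm_zero : cm (0 : Matrix (Fin n) (Fin n) ℝ) = 0 := by
  ext i j; simp [cm]

lemma cm_one : cm (1 : Matrix (Fin n) (Fin n) ℝ) = 1 := by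
  ext i j
  by_cases h : i = j <;> simp [cm, Matrix.one_apply, h]

lemma cm_transpose (M : Matrix (Fin n) (Fin n) ℝ) : cm Mᵀ = (cm M)ᵀ := by
  ext i j; simp [cm]

lemma cm_conjTranspose (M : Matrix (Fin n) (Fin n) ℝ) : cm Mᵀ = (cm M)ᴴ := by
  ext i j; simp [cm, Matrix.conjTranspose_apply, Complex.conj_ofReal]

lemma cm_psd {M : Matrix (Fin n) (Fin n) ℝ} (hM : M.PosSemidef) : (cm M).PosSemidef := by
  obtain ⟨B, hB⟩ : ∃ B : Matrix (Fin n) (Fin n) ℝ, M = Bᴴ * B := by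
    classical
    open MatrixOrder in
    obtain ⟨X, hX, -, hXX⟩ := CFC.exists_sqrt_of_isSelfAdjoint_of_quasispectrumRestricts
      hM.isHermitian (QuasispectrumRestricts.nnreal_of_nonneg hM.nonneg)
    exact ⟨X, by rw [← hXX, ← Matrix.star_eq_conjTranspose, hX.star_eq]⟩
  have hBt : (Bᴴ : Matrix (Fin n) (Fin n) ℝ) = Bᵀ := by
    ext i j; simp [Matrix.conjTranspose_apply]
  have : cm M = (cm B)ᴴ * cm B := by
    rw [hB, hBt, cm_mul, cm_conjTranspose]
  rw [this]
  exact Matrix.posSemidef_conjTranspose_mul_self (cm B)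

lemma cm_shift (M : Matrix (Fin n) (Fin n) ℝ) (v w : Fin n → ℂ) :
    star v ⬝ᵥ (cm M *ᵥ w) = star (cm Mᵀ *ᵥ v) ⬝ᵥ w := by
  simp only [dotProduct, Matrix.mulVec, Pi.star_apply, cm, Matrix.map_apply,
    Matrix.transpose_apply, dotProduct, star_sum, star_mul', Complex.star_def,
    Complex.conj_ofReal, Finset.mul_sum, Finset.sum_mul]
  rw [Finset.sum_comm]
  exact Finset.sum_congr rfl fun i _ => Finset.sum_congr rfl fun j _ => by ring

lemma conj_dot (a b : Fin n → ℂ) :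
    star a ⬝ᵥ b = (starRingEnd ℂ) (star b ⬝ᵥ a) := by
  simp only [dotProduct, Pi.star_apply, map_sum, Complex.star_def]
  exact Finset.sum_congr rfl fun i _ => by simp [mul_comm]

end Stmt3Aux

open Stmt3Aux

/-- If `(Q, A)` is detectable, then `V = PL + I` is nonsingular, where `P` solves the
Riccati equation and `L` solves the Lyapunov equation. -/
theorem stmt_3 {n : ℕ} (A R Q P L Ac : Matrix (Fin n) (Fin n) ℝ)
    (hR : R.PosSemidef) (hQ : Q.PosSemidef) (hPsd : P.PosSemidef) (hLsymm : L.IsSymm)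
    (hRic : P * A + Aᵀ * P - P * R * P + Q = 0)
    (hAc : Ac = A - R * P)
    (hLyap : L * Acᵀ + Ac * L = R)
    (hdet : ∀ (lam : ℂ) (w : Fin n → ℂ), w ≠ 0 → 0 ≤ lam.re →
      (A.map (Complex.ofReal)).mulVec w = lam • w →
      (Q.map (Complex.ofReal)).mulVec w ≠ 0) :
    IsUnit (P * L + 1) := by
  classical
  by_contra hV
  -- real symmetry facts
  have hPsymm : Pᵀ = P := by
    ext i j
    have h := congrFun (congrFun hPsd.1 i) j
    simpa [Matrix.conjTranspose_apply] using h
  have hRsymm : Rᵀ = R := by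
    ext i j
    have h := congrFun (congrFun hR.1 i) j
    simpa [Matrix.conjTranspose_apply] using h
  have hLsymm' : Lᵀ = L := hLsymm
  -- the rewritten Riccati equation
  have key1 : P * Ac + Acᵀ * P + Q + P * R * P = 0 := by
    subst hAc
    have expand : P * (A - R * P) + (A - R * P)ᵀ * P + Q + P * R * P
        = P * A + Aᵀ * P - P * R * P + Q := by
      rw [Matrix.transpose_sub, Matrix.transpose_mul, hPsymm, hRsymm]
      noncomm_ring
    rw [expand, hRic]
  -- complexified matrices
  set A' := cm (n := n) A with hA'
  set R' := cm (n := n) R with hR'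
  set Q' := cm (n := n) Q with hQ'
  set P' := cm (n := n) P with hP'
  set L' := cm (n := n) L with hL'
  set Ac' := cm (n := n) Ac with hAc'
  have hR'psd : R'.PosSemidef := cm_psd hR
  have hQ'psd : Q'.PosSemidef := cm_psd hQ
  have hP'psd : P'.PosSemidef := cm_psd hPsd
  set V' : Matrix (Fin n) (Fin n) ℂ := P' * L' + 1 with hV'
  -- complexified equations
  have key1C : P' * Ac' + cm Acᵀ * P' + Q' + P' * R' * P' = 0 := by
    rw [hP', hAc', hQ', hR', ← cm_mul, ← cm_mul, ← cm_mul, ← cm_mul, ← cm_add, ← cm_add,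
      ← cm_add, key1, cm_zero]
  have hLyapC : L' * cm Acᵀ + Ac' * L' = R' := by
    rw [hL', hAc', hR', ← cm_mul, ← cm_mul, ← cm_add, hLyap]
  have hAcC : Ac' = A' - R' * P' := by
    rw [hAc', hA', hR', hP', ← cm_mul, ← cm_sub, hAc]
  -- kernel vectors
  have hPLx : ∀ x : Fin n → ℂ, V' *ᵥ x = 0 → P' *ᵥ (L' *ᵥ x) = -x := by
    intro x hx
    rw [hV', Matrix.add_mulVec, Matrix.one_mulVec] at hx
    rw [Matrix.mulVec_mulVec]
    linear_combination (norm := module) hx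
  -- Claim 1 : the Lyapunov trace identity on kernel vectors
  have claim1 : ∀ x : Fin n → ℂ, V' *ᵥ x = 0 →
      (starRingEnd ℂ) (star x ⬝ᵥ (Ac' *ᵥ (L' *ᵥ x))) + star x ⬝ᵥ (Ac' *ᵥ (L' *ᵥ x))
        = star x ⬝ᵥ (R' *ᵥ x) := by
    intro x hx
    have h := congrArg (fun M : Matrix (Fin n) (Fin n) ℂ => star x ⬝ᵥ (M *ᵥ x)) hLyapC
    simp only [Matrix.add_mulVec, dotProduct_add, ← Matrix.mulVec_mulVec] at h
    have e1 : star x ⬝ᵥ (L' *ᵥ (cm Acᵀ *ᵥ x))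
        = (starRingEnd ℂ) (star x ⬝ᵥ (Ac' *ᵥ (L' *ᵥ x))) := by
      rw [hL', cm_shift L x (cm Acᵀ *ᵥ x), hLsymm',
        cm_shift Acᵀ (cm L *ᵥ x) x, Matrix.transpose_transpose, ← hAc', ← hL',
        conj_dot]
    rw [e1] at h
    exact h
  -- Claim 2 : Q' kills L'x for kernel vectors
  have claim2 : ∀ x : Fin n → ℂ, V' *ᵥ x = 0 → Q' *ᵥ (L' *ᵥ x) = 0 := by
    intro x hx
    have hPw := hPLx x hx
    set w := L' *ᵥ x with hw
    have h := congrArg (fun M : Matrix (Fin n) (Fin n) ℂ => star w ⬝ᵥ (M *ᵥ w)) key1C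
    simp only [Matrix.add_mulVec, dotProduct_add, ← Matrix.mulVec_mulVec,
      Matrix.zero_mulVec, dotProduct_zero] at h
    set t := star x ⬝ᵥ (Ac' *ᵥ w) with ht
    have e1 : star w ⬝ᵥ (P' *ᵥ (Ac' *ᵥ w)) = -t := by
      rw [hP', cm_shift P w (Ac' *ᵥ w), hPsymm, ← hP', hPw]
      simp [ht]
    have e2 : star w ⬝ᵥ (cm Acᵀ *ᵥ (P' *ᵥ w)) = -(starRingEnd ℂ) t := by
      rw [hPw, Matrix.mulVec_neg, dotProduct_neg,
        cm_shift Acᵀ w x, Matrix.transpose_transpose, ← hAc', conj_dot, ht]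
    have e4 : star w ⬝ᵥ (P' *ᵥ (R' *ᵥ (P' *ᵥ w))) = star x ⬝ᵥ (R' *ᵥ x) := by
      rw [hP', cm_shift P w (R' *ᵥ (P' *ᵥ w)), hPsymm, ← hP', hPw]
      simp [Matrix.mulVec_neg]
    have hc1 := claim1 x hx
    rw [← hw] at hc1
    rw [← ht] at hc1
    have hqw : star w ⬝ᵥ (Q' *ᵥ w) = 0 := by
      rw [e1, e2, e4] at h
      linear_combination h + hc1
    exact (hQ'psd.dotProduct_mulVec_zero_iff w).mp hqw
  -- Claim 3 : the kernel is invariant under Ac'ᵀ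
  have claim3 : ∀ x : Fin n → ℂ, V' *ᵥ x = 0 → V' *ᵥ (cm Acᵀ *ᵥ x) = 0 := by
    intro x hx
    have hPw := hPLx x hx
    have hQw := claim2 x hx
    set w := L' *ᵥ x with hw
    have hv1 := congrArg (fun M : Matrix (Fin n) (Fin n) ℂ => M *ᵥ w) key1C
    simp only [Matrix.add_mulVec, ← Matrix.mulVec_mulVec, Matrix.zero_mulVec] at hv1
    rw [hPw, hQw] at hv1
    have hv2 := congrArg (fun M : Matrix (Fin n) (Fin n) ℂ => M *ᵥ x) hLyapC
    simp only [Matrix.add_mulVec, ← Matrix.mulVec_mulVec] at hv2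
    have hv3 := congrArg (fun v => P' *ᵥ v) hv2
    simp only [Matrix.mulVec_add] at hv3
    rw [hV', Matrix.add_mulVec, Matrix.one_mulVec, ← Matrix.mulVec_mulVec]
    simp only [Matrix.mulVec_neg] at hv1
    have hv1' : P' *ᵥ (Ac' *ᵥ w) = cm Acᵀ *ᵥ x + P' *ᵥ (R' *ᵥ x) := by
      linear_combination (norm := module) hv1
    rw [hv1'] at hv3
    linear_combination (norm := module) hv3
  -- build the kernel submodule and find an eigenvector of Ac'ᵀ inside it
  have hdet0 : (P * L + 1).det = 0 := by
    by_contra h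
    exact hV ((Matrix.isUnit_iff_isUnit_det _).mpr (isUnit_iff_ne_zero.mpr h))
  obtain ⟨v0, hv0ne, hv0⟩ := Matrix.exists_mulVec_eq_zero_iff.mpr hdet0
  have hx0mem : V' *ᵥ (fun i => (v0 i : ℂ)) = 0 := by
    have hVeq : V' = cm (P * L + 1) := by
      rw [cm_add, cm_mul, cm_one, hV', hP', hL']
    rw [hVeq]
    ext i
    have := RingHom.map_mulVec Complex.ofRealHom (P * L + 1) v0 i
    rw [hv0] at this
    rw [Pi.zero_apply, map_zero] at this
    exact this.symm
  have hx0ne : (fun i => (v0 i : ℂ)) ≠ 0 := by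
    intro h
    apply hv0ne
    funext i
    have := congrFun h i
    simpa using this
  set K : Submodule ℂ (Fin n → ℂ) := LinearMap.ker V'.mulVecLin with hK
  haveI : Nontrivial K := by
    refine nontrivial_of_ne ⟨fun i => (v0 i : ℂ), ?_⟩ 0 ?_
    · simp [hK, LinearMap.mem_ker, Matrix.mulVecLin_apply, hx0mem]
    · intro h
      exact hx0ne (congrArg Subtype.val h)
  have hTmem : ∀ x ∈ K, (cm Acᵀ).mulVecLin x ∈ K := by
    intro x hx
    simp only [hK, LinearMap.mem_ker, Matrix.mulVecLin_apply] at hx ⊢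
    exact claim3 x hx
  set f : Module.End ℂ K := ((cm Acᵀ).mulVecLin).restrict hTmem with hf
  obtain ⟨μ, hμ⟩ := Module.End.exists_eigenvalue f
  obtain ⟨xx, hev⟩ := hμ.exists_hasEigenvector
  set x : Fin n → ℂ := (xx : Fin n → ℂ) with hxdef
  have hxker : V' *ᵥ x = 0 := by
    have hxmem : x ∈ K := xx.2
    rw [hK, LinearMap.mem_ker, Matrix.mulVecLin_apply] at hxmem
    exact hxmem
  have hxne : x ≠ 0 := by
    intro h
    exact hev.right (by exact Subtype.ext h)
  have heig : cm Acᵀ *ᵥ x = μ • x := by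
    have h1 := hev.apply_eq_smul
    have h2 := congrArg Subtype.val h1
    rw [hf] at h2
    simp only [LinearMap.restrict_apply, Matrix.mulVecLin_apply, SetLike.val_smul] at h2
    exact h2
  -- now derive the contradiction
  set w : Fin n → ℂ := L' *ᵥ x with hw
  have hPw : P' *ᵥ w = -x := hPLx x hxker
  have hQw : Q' *ᵥ w = 0 := claim2 x hxker
  have hwne : w ≠ 0 := by
    intro h
    apply hxne
    have := hPw
    rw [h, Matrix.mulVec_zero] at this
    simpa using this.symm
  -- eigen equation for A
  have hAw : A' *ᵥ w = (-μ) • w := by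
    have hv2 := congrArg (fun M : Matrix (Fin n) (Fin n) ℂ => M *ᵥ x) hLyapC
    simp only [Matrix.add_mulVec, ← Matrix.mulVec_mulVec] at hv2
    rw [heig, Matrix.mulVec_smul] at hv2
    have hAcw : Ac' *ᵥ w = A' *ᵥ w + R' *ᵥ x := by
      rw [hAcC, Matrix.sub_mulVec, ← Matrix.mulVec_mulVec, hPw, Matrix.mulVec_neg]
      module
    rw [hAcw, ← hw] at hv2
    have : μ • w + (A' *ᵥ w + R' *ᵥ x) = R' *ᵥ x := hv2
    linear_combination (norm := module) this
  -- scalar quantities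
  set s : ℂ := star x ⬝ᵥ (R' *ᵥ x) with hs
  set r : ℂ := star x ⬝ᵥ w with hr
  set pw : ℂ := star w ⬝ᵥ (P' *ᵥ w) with hpw
  have hpw_eq : pw = -(starRingEnd ℂ) r := by
    rw [hpw, hPw, dotProduct_neg, conj_dot]
  have hpw_nonneg : (0 : ℂ) ≤ pw := hP'psd.dotProduct_mulVec_nonneg w
  have hpw_ne : pw ≠ 0 := by
    intro h
    apply hxne
    have h0 : P' *ᵥ w = 0 := (hP'psd.dotProduct_mulVec_zero_iff w).mp h
    rw [hPw] at h0
    simpa using h0.symm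
  have hpw_im : pw.im = 0 := by
    have := hpw_nonneg
    rw [Complex.le_def] at this
    exact this.2.symm
  have hpw_re : 0 < pw.re := by
    have h1 : 0 ≤ pw.re := by
      have := hpw_nonneg
      rw [Complex.le_def] at this
      simpa using this.1
    rcases lt_or_eq_of_le h1 with h | h
    · exact h
    · exact absurd (Complex.ext h.symm hpw_im) hpw_ne
  have hr_re : r.re = -pw.re := by
    have := congrArg Complex.re hpw_eq
    simp at this
    linarith
  have hr_im : r.im = 0 := by
    have := congrArg Complex.im hpw_eq
    simp at this
    linarith [hpw_im]
  -- s is real nonnegative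
  have hs_nonneg : (0 : ℂ) ≤ s := hR'psd.dotProduct_mulVec_nonneg x
  have hs_im : s.im = 0 := by
    have := hs_nonneg; rw [Complex.le_def] at this; exact this.2.symm
  have hs_re : 0 ≤ s.re := by
    have := hs_nonneg; rw [Complex.le_def] at this; simpa using this.1
  -- t
  have hAcw : Ac' *ᵥ w = (-μ) • w + R' *ᵥ x := by
    rw [hAcC, Matrix.sub_mulVec, ← Matrix.mulVec_mulVec, hPw, Matrix.mulVec_neg, ← hAw]
    module
  have ht_eq : star x ⬝ᵥ (Ac' *ᵥ w) = -μ * r + s := by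
    rw [hAcw, dotProduct_add, dotProduct_smul, ← hr, ← hs]
    simp [smul_eq_mul]
  have hc1 := claim1 x hxker
  rw [← hw, ht_eq, ← hs] at hc1
  -- take real parts
  have hre2 : μ.re * r.re = s.re / 2 := by
    have h0 := congrArg Complex.re hc1
    simp only [Complex.add_re, Complex.conj_re] at h0
    have hmr : (-μ * r).re = -(μ.re * r.re) := by
      rw [Complex.mul_re, Complex.neg_re, Complex.neg_im, hr_im]
      ring
    linarith [h0, hmr]
  have hmu : μ.re ≤ 0 := by
    by_contra hpos
    push_neg at hpos
    have hneg : μ.re * r.re < 0 := by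
      rw [hr_re]
      nlinarith [hpw_re]
    linarith [hre2, hs_re, hneg]
  -- contradiction with detectability
  have hlamre : (0 : ℝ) ≤ (-μ).re := by
    rw [Complex.neg_re]
    linarith
  have hAmap : (A.map (Complex.ofReal)).mulVec w = (-μ) • w := by
    rw [show A.map (Complex.ofReal) = A' by rw [hA']; rfl]
    exact hAw
  have hQmap : (Q.map (Complex.ofReal)).mulVec w = 0 := by
    rw [show Q.map (Complex.ofReal) = Q' by rw [hQ']; rfl]
    exact hQw
  exact (hdet (-μ) w hwne hlamre hAmap) hQmap
end

section
/- Let A_c, R, L be real n×n matrices with L symmetric solving L A_cᵀ + A_c L = R, R ⪰ 0, and A_c Hurwitz (all eigenvalues with negative real part). If (A, R) is controllable, where A = A_c + RP for a symmetric P, then L is negative definite. -/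
open Matrix Complex Filter
open scoped ComplexOrder

attribute [local instance] Matrix.linftyOpNormedAddCommGroup Matrix.linftyOpNormedRing
  Matrix.linftyOpNormedAlgebra

/-- From membership in the spectrum of a complex matrix, extract an eigenvector. -/
theorem stmt4_spectrum_exists_eigenvec {n : ℕ} (M : Matrix (Fin n) (Fin n) ℂ)
    {μ : ℂ} (h : μ ∈ spectrum ℂ M) : ∃ v : Fin n → ℂ, v ≠ 0 ∧ M.mulVec v = μ • v := by
  rw [spectrum.mem_iff] at h
  have halg : algebraMap ℂ (Matrix (Fin n) (Fin n) ℂ) μ = μ • (1 : Matrix (Fin n) (Fin n) ℂ) :=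
    Algebra.algebraMap_eq_smul_one μ
  rw [halg] at h
  have hdet : (μ • (1 : Matrix (Fin n) (Fin n) ℂ) - M).det = 0 := by
    by_contra hd
    exact h ((Matrix.isUnit_iff_isUnit_det _).mpr (isUnit_iff_ne_zero.mpr hd))
  obtain ⟨v, hv, hv0⟩ := (Matrix.exists_mulVec_eq_zero_iff.mpr hdet)
  refine ⟨v, hv, ?_⟩
  rw [sub_mulVec, smul_mulVec, one_mulVec, sub_eq_zero] at hv0
  exact hv0.symm

/-- Powers of a complex matrix whose spectral radius is `< 1` tend to zero in norm. -/
theorem stmt4_pow_norm_tendsto_zero {n : ℕ} [Nonempty (Fin n)] (M : Matrix (Fin n) (Fin n) ℂ)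
    (h : spectralRadius ℂ M < 1) :
    Tendsto (fun k : ℕ => ‖M ^ k‖) atTop (nhds 0) := by
  obtain ⟨r, hr1, hr2⟩ := ENNReal.lt_iff_exists_nnreal_btwn.mp h
  have hr2' : (r : ℝ) < 1 := by exact_mod_cast hr2
  have hgel := spectrum.pow_nnnorm_pow_one_div_tendsto_nhds_spectralRadius M
  have hev : ∀ᶠ k : ℕ in atTop, (‖M ^ k‖₊ : ENNReal) ^ (1 / k : ℝ) < (r : ENNReal) :=
    hgel.eventually_lt_const hr1
  have hev2 : ∀ᶠ k : ℕ in atTop, ‖M ^ k‖ ≤ (r : ℝ) ^ k := by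
    filter_upwards [hev, eventually_gt_atTop 0] with k hk hk0
    have hkR : (0 : ℝ) < (k : ℝ) := by exact_mod_cast hk0
    have h2 := ENNReal.rpow_lt_rpow hk hkR
    rw [← ENNReal.rpow_mul, one_div, inv_mul_cancel₀ (ne_of_gt hkR), ENNReal.rpow_one,
      ENNReal.rpow_natCast] at h2
    have h3 : (‖M ^ k‖₊ : ENNReal) ≤ ((r ^ k : NNReal) : ENNReal) := by
      rw [ENNReal.coe_pow]; exact le_of_lt h2
    have h4 : ‖M ^ k‖₊ ≤ r ^ k := by exact_mod_cast h3
    calc ‖M ^ k‖ = ((‖M ^ k‖₊ : NNReal) : ℝ) := rfl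
      _ ≤ ((r ^ k : NNReal) : ℝ) := by exact_mod_cast h4
      _ = (r : ℝ) ^ k := by push_cast; ring
  have hpow : Tendsto (fun k : ℕ => (r : ℝ) ^ k) atTop (nhds 0) :=
    tendsto_pow_atTop_nhds_zero_of_lt_one r.coe_nonneg hr2'
  exact squeeze_zero' (Eventually.of_forall fun k => norm_nonneg _) hev2 hpow

/-- A bound on a real quadratic form by the sup of the vector entries. -/
theorem stmt4_quad_bound {n : ℕ} (L : Matrix (Fin n) (Fin n) ℝ) (v : Fin n → ℝ) (c : ℝ)
    (hc : 0 ≤ c) (hv : ∀ a, |v a| ≤ c) :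
    |v ⬝ᵥ (L *ᵥ v)| ≤ (∑ a, ∑ b, |L a b|) * c * c := by
  have h1 : ∀ a, |(L *ᵥ v) a| ≤ (∑ b, |L a b|) * c := by
    intro a
    calc |(L *ᵥ v) a| = |∑ b, L a b * v b| := rfl
      _ ≤ ∑ b, |L a b * v b| := Finset.abs_sum_le_sum_abs _ _
      _ ≤ ∑ b, |L a b| * c := Finset.sum_le_sum fun b _ => by
          rw [abs_mul]; exact mul_le_mul_of_nonneg_left (hv b) (abs_nonneg _)
      _ = (∑ b, |L a b|) * c := by rw [Finset.sum_mul]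
  calc |v ⬝ᵥ (L *ᵥ v)| = |∑ a, v a * (L *ᵥ v) a| := rfl
    _ ≤ ∑ a, |v a * (L *ᵥ v) a| := Finset.abs_sum_le_sum_abs _ _
    _ ≤ ∑ a, c * ((∑ b, |L a b|) * c) := Finset.sum_le_sum fun a _ => by
        rw [abs_mul]
        exact mul_le_mul (hv a) (h1 a) (abs_nonneg _) hc
    _ = ∑ a, (∑ b, |L a b|) * c * c := Finset.sum_congr rfl fun a _ => by ring
    _ = (∑ a, ∑ b, |L a b|) * c * c := by rw [← Finset.sum_mul, ← Finset.sum_mul]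

/-- The semidefinite part: a symmetric solution of the Lyapunov equation with Hurwitz `Ac`
and `R ⪰ 0` satisfies `L ⪯ 0`. -/
theorem stmt4_negSemidef {n : ℕ} (R L Ac : Matrix (Fin n) (Fin n) ℝ)
    (hR : R.PosSemidef) (hLsymm : L.IsSymm)
    (hLyap : L * Acᵀ + Ac * L = R)
    (hHurwitz : ∀ (lam : ℂ) (v : Fin n → ℂ), v ≠ 0 →
      (Ac.map (Complex.ofReal)).mulVec v = lam • v → lam.re < 0) :
    (-L).PosSemidef := by
  classical
  refine posSemidef_iff_dotProduct_mulVec.mpr ⟨?_, ?_⟩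
  · rw [Matrix.IsHermitian, conjTranspose_eq_transpose_of_trivial]
    exact hLsymm.neg
  intro x
  rcases eq_or_ne x 0 with rfl | hx
  · simp
  have hex : ∃ i, x i ≠ 0 := by
    by_contra h; push_neg at h; exact hx (funext h)
  obtain ⟨i0, -⟩ := hex
  haveI : Nonempty (Fin n) := ⟨i0⟩
  set mm : Matrix (Fin n) (Fin n) ℝ →+* Matrix (Fin n) (Fin n) ℂ :=
    (Complex.ofRealHom.mapMatrix) with hmm
  have hmm_apply : ∀ M : Matrix (Fin n) (Fin n) ℝ, mm M = M.map Complex.ofReal := fun _ => rfl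
  obtain ⟨B, hBdef⟩ : ∃ B : Matrix (Fin n) (Fin n) ℝ, B = 1 - Ac := ⟨_, rfl⟩
  -- B is invertible
  have hBdet : IsUnit B.det := by
    rw [isUnit_iff_ne_zero]
    intro h0
    have h0' : (mm B).det = 0 := by
      rw [← RingHom.map_det]
      simp [h0]
    obtain ⟨v, hv, hv0⟩ := Matrix.exists_mulVec_eq_zero_iff.mpr h0'
    have hBc : mm B = 1 - mm Ac := by rw [hBdef, _root_.map_sub, _root_.map_one]
    rw [hBc, sub_mulVec, one_mulVec, sub_eq_zero] at hv0
    have := hHurwitz 1 v hv (by rw [← hmm_apply, ← hv0, one_smul])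
    norm_num at this
  -- the Cayley transform
  obtain ⟨C, hCdef⟩ : ∃ C : Matrix (Fin n) (Fin n) ℝ, C = B⁻¹ * (1 + Ac) := ⟨_, rfl⟩
  have hBC : B * C = 1 + Ac := by
    rw [hCdef, ← Matrix.mul_assoc, Matrix.mul_nonsing_inv B hBdet, Matrix.one_mul]
  obtain ⟨Q, hQdef⟩ : ∃ Q : Matrix (Fin n) (Fin n) ℝ, Q = B⁻¹ * (R + R) * (B⁻¹)ᵀ := ⟨_, rfl⟩
  have hQpsd : Q.PosSemidef := by
    have h := (hR.add hR).mul_mul_conjTranspose_same B⁻¹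
    rw [conjTranspose_eq_transpose_of_trivial] at h
    rwa [hQdef]
  -- the key identity
  have hKey : C * L * Cᵀ - L = Q := by
    have hE : B * (C * L * Cᵀ - L) * Bᵀ = R + R := by
      have e1 : B * (C * L * Cᵀ - L) * Bᵀ
          = (B * C) * L * (Cᵀ * Bᵀ) - B * L * Bᵀ := by noncomm_ring
      have e2 : Cᵀ * Bᵀ = (1 + Ac)ᵀ := by rw [← Matrix.transpose_mul, hBC]
      rw [e1, e2, hBC, hBdef]
      rw [Matrix.transpose_add, Matrix.transpose_sub, Matrix.transpose_one]
      have e3 : (1 + Ac) * L * (1 + Acᵀ) - (1 - Ac) * L * (1 - Acᵀ)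
          = (L * Acᵀ + Ac * L) + (L * Acᵀ + Ac * L) := by noncomm_ring
      rw [e3, hLyap]
    have hBTdet : IsUnit Bᵀ.det := by rwa [Matrix.det_transpose]
    have cancel : ∀ E : Matrix (Fin n) (Fin n) ℝ, B⁻¹ * (B * E * Bᵀ) * (Bᵀ)⁻¹ = E := by
      intro E
      rw [Matrix.mul_assoc B E Bᵀ, ← Matrix.mul_assoc B⁻¹ B (E * Bᵀ),
        Matrix.nonsing_inv_mul B hBdet, Matrix.one_mul,
        Matrix.mul_assoc E Bᵀ (Bᵀ)⁻¹, Matrix.mul_nonsing_inv Bᵀ hBTdet, Matrix.mul_one]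
    have hmain : C * L * Cᵀ - L = B⁻¹ * (R + R) * (Bᵀ)⁻¹ := by
      rw [← hE]; exact (cancel _).symm
    rw [hQdef, Matrix.transpose_nonsing_inv]
    exact hmain
  -- the iterates
  obtain ⟨f, hfdef⟩ : ∃ f : ℕ → ℝ, f = fun N => x ⬝ᵥ ((C ^ N * L * (C ^ N)ᵀ) *ᵥ x) := ⟨_, rfl⟩
  have hfN : ∀ N, f N = x ⬝ᵥ ((C ^ N * L * (C ^ N)ᵀ) *ᵥ x) := fun N => by rw [hfdef]
  have hf0 : f 0 = x ⬝ᵥ (L *ᵥ x) := by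
    rw [hfN 0]
    simp only [pow_zero, Matrix.transpose_one, Matrix.mul_one, Matrix.one_mul]
  have hCLC : C * L * Cᵀ = L + Q := by
    rw [← hKey]; noncomm_ring
  have hmono : ∀ N, f N ≤ f (N + 1) := by
    intro N
    have hiter : C ^ (N + 1) * L * (C ^ (N + 1))ᵀ
        = C ^ N * L * (C ^ N)ᵀ + C ^ N * Q * (C ^ N)ᵀ := by
      have t1 : (C ^ (N + 1))ᵀ = Cᵀ * (C ^ N)ᵀ := by rw [pow_succ, Matrix.transpose_mul]
      rw [t1, pow_succ]
      have t2 : C ^ N * C * L * (Cᵀ * (C ^ N)ᵀ) = C ^ N * (C * L * Cᵀ) * (C ^ N)ᵀ := by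
        noncomm_ring
      rw [t2, hCLC]
      noncomm_ring
    have hpsd : (C ^ N * Q * (C ^ N)ᵀ).PosSemidef := by
      have h := hQpsd.mul_mul_conjTranspose_same (C ^ N)
      rwa [conjTranspose_eq_transpose_of_trivial] at h
    have hnn : 0 ≤ x ⬝ᵥ ((C ^ N * Q * (C ^ N)ᵀ) *ᵥ x) := by
      have := hpsd.dotProduct_mulVec_nonneg x
      rwa [star_trivial] at this
    have heq : f (N + 1) = f N + x ⬝ᵥ ((C ^ N * Q * (C ^ N)ᵀ) *ᵥ x) := by
      rw [hfN, hfN, hiter, Matrix.add_mulVec, dotProduct_add]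
    linarith [heq, hnn]
  have hle : ∀ N, x ⬝ᵥ (L *ᵥ x) ≤ f N := by
    intro N
    rw [← hf0]
    exact monotone_nat_of_le_succ hmono (Nat.zero_le N)
  -- the complexified Cayley transform and its spectrum
  obtain ⟨Cc, hCc⟩ : ∃ Cc : Matrix (Fin n) (Fin n) ℂ, Cc = mm C := ⟨_, rfl⟩
  have hspec : ∀ μ ∈ spectrum ℂ Cc, ‖μ‖₊ < 1 := by
    intro μ hμ
    obtain ⟨v, hv, hveig⟩ := stmt4_spectrum_exists_eigenvec Cc hμ
    have hBCc : mm B * Cc = 1 + mm Ac := by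
      rw [hCc, ← _root_.map_mul, hBC, _root_.map_add, _root_.map_one]
    have hBc : mm B = 1 - mm Ac := by rw [hBdef, _root_.map_sub, _root_.map_one]
    have h1 : (1 + mm Ac) *ᵥ v = μ • ((1 - mm Ac) *ᵥ v) := by
      rw [← hBc, ← hBCc, ← Matrix.mulVec_mulVec, hveig, Matrix.mulVec_smul]
    rw [Matrix.add_mulVec, Matrix.sub_mulVec, Matrix.one_mulVec, smul_sub] at h1
    have h2 : (1 + μ) • ((mm Ac) *ᵥ v) = (μ - 1) • v := by
      funext i
      have h1i := congrFun h1 i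
      simp only [Pi.add_apply, Pi.sub_apply, Pi.smul_apply, smul_eq_mul] at h1i ⊢
      ring_nf
      ring_nf at h1i
      linear_combination h1i
    by_cases hμ1 : μ = -1
    · rw [hμ1] at h2
      have hz : ((-1 : ℂ) - 1) • v = 0 := by
        rw [← h2]; norm_num
      rw [smul_eq_zero] at hz
      rcases hz with h | h
      · norm_num at h
      · exact absurd h hv
    · have hμ1' : μ + 1 ≠ 0 := by
        intro h; exact hμ1 (by linear_combination h)
      have heig : (mm Ac) *ᵥ v = ((μ - 1) / (μ + 1)) • v := by
        funext i
        have h2i := congrFun h2 i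
        simp only [Pi.smul_apply, smul_eq_mul] at h2i ⊢
        field_simp
        linear_combination h2i
      have hre := hHurwitz ((μ - 1) / (μ + 1)) v hv (by rw [← hmm_apply]; exact heig)
      have hns : 0 < Complex.normSq (μ + 1) := Complex.normSq_pos.mpr hμ1'
      rw [Complex.div_re, ← add_div, div_neg_iff] at hre
      have hnum : (μ - 1).re * (μ + 1).re + (μ - 1).im * (μ + 1).im < 0 := by
        rcases hre with ⟨_, h⟩ | ⟨h, _⟩
        · linarith
        · exact h
      have hlt : μ.re ^ 2 + μ.im ^ 2 < 1 := by
        simp only [Complex.sub_re, Complex.add_re, Complex.sub_im, Complex.add_im,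
          Complex.one_re, Complex.one_im] at hnum
        nlinarith
      have hnormlt : ‖μ‖ < 1 := by
        have h5 : ‖μ‖ ^ 2 = μ.re ^ 2 + μ.im ^ 2 := by
          rw [Complex.sq_norm, Complex.normSq_apply]; ring
        nlinarith [norm_nonneg μ]
      rw [← NNReal.coe_lt_coe, coe_nnnorm]
      simpa using hnormlt
  have hrad : spectralRadius ℂ Cc < 1 := by
    have := spectrum.spectralRadius_lt_of_forall_lt Cc hspec
    simpa using this
  have hnorm0 : Tendsto (fun N : ℕ => ‖Cc ^ N‖) atTop (nhds 0) :=
    stmt4_pow_norm_tendsto_zero Cc hrad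
  -- entrywise bound
  have hentry : ∀ (N : ℕ) (i j : Fin n), |(C ^ N) i j| ≤ ‖Cc ^ N‖ := by
    intro N i j
    have hmp : Cc ^ N = mm (C ^ N) := by rw [hCc, ← map_pow]
    have he : ((Cc ^ N) i j) = Complex.ofReal ((C ^ N) i j) := by rw [hmp]; rfl
    have h1 : ‖(Cc ^ N) i j‖₊ ≤ ∑ k, ‖(Cc ^ N) i k‖₊ :=
      Finset.single_le_sum (f := fun k => ‖(Cc ^ N) i k‖₊) (fun _ _ => zero_le)
        (Finset.mem_univ j)
    have h2 : (∑ k, ‖(Cc ^ N) i k‖₊) ≤ ‖Cc ^ N‖₊ := by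
      rw [Matrix.linfty_opNNNorm_def]
      exact Finset.le_sup (f := fun i => ∑ k, ‖(Cc ^ N) i k‖₊) (Finset.mem_univ i)
    have h3 : ‖(Cc ^ N) i j‖ ≤ ‖Cc ^ N‖ := by
      rw [← coe_nnnorm, ← coe_nnnorm]
      exact_mod_cast h1.trans h2
    rwa [he, Complex.norm_real, Real.norm_eq_abs] at h3
  -- the bound on the quadratic form
  set S : ℝ := ∑ i, |x i| with hS
  set KL : ℝ := ∑ a, ∑ b, |L a b| with hKL
  have hS0 : 0 ≤ S := Finset.sum_nonneg fun _ _ => abs_nonneg _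
  have hfbound : ∀ N, |f N| ≤ KL * (‖Cc ^ N‖ * S) * (‖Cc ^ N‖ * S) := by
    intro N
    set y : Fin n → ℝ := (C ^ N)ᵀ *ᵥ x with hy
    have hfy : f N = y ⬝ᵥ (L *ᵥ y) := by
      rw [hfN, hy]
      rw [← Matrix.mulVec_mulVec, ← Matrix.mulVec_mulVec]
      rw [Matrix.dotProduct_mulVec x (C ^ N), ← Matrix.mulVec_transpose]
    have hyb : ∀ a, |y a| ≤ ‖Cc ^ N‖ * S := by
      intro a
      have hya : y a = ∑ i, (C ^ N) i a * x i := rfl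
      rw [hya]
      calc |∑ i, (C ^ N) i a * x i| ≤ ∑ i, |(C ^ N) i a * x i| :=
            Finset.abs_sum_le_sum_abs _ _
        _ ≤ ∑ i, ‖Cc ^ N‖ * |x i| := Finset.sum_le_sum fun i _ => by
            rw [abs_mul]
            exact mul_le_mul_of_nonneg_right (hentry N i a) (abs_nonneg _)
        _ = ‖Cc ^ N‖ * S := by rw [← Finset.mul_sum]
    rw [hfy]
    exact stmt4_quad_bound L y (‖Cc ^ N‖ * S)
      (mul_nonneg (norm_nonneg _) hS0) hyb
  have hgb : Tendsto (fun N : ℕ => KL * (‖Cc ^ N‖ * S) * (‖Cc ^ N‖ * S)) atTop (nhds 0) := by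
    have h1 : Tendsto (fun N : ℕ => ‖Cc ^ N‖ * S) atTop (nhds (0 * S)) := hnorm0.mul_const S
    rw [zero_mul] at h1
    have h2 := (h1.const_mul KL).mul h1
    simpa using h2
  have hf0' : Tendsto f atTop (nhds 0) :=
    squeeze_zero_norm (fun N => by rw [Real.norm_eq_abs]; exact hfbound N) hgb
  have hfinal : x ⬝ᵥ (L *ᵥ x) ≤ 0 := ge_of_tendsto' hf0' hle
  rw [star_trivial]
  rw [Matrix.neg_mulVec, dotProduct_neg]
  linarith

/-- If `(A, R)` is controllable (Hautus), `A_c = A - RP` is Hurwitz and `L` is the symmetric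
solution of the Lyapunov equation `L A_cᵀ + A_c L = R` with `R ⪰ 0`, then `L` is negative
definite. -/
theorem stmt_4 {n : ℕ} (A R P L Ac : Matrix (Fin n) (Fin n) ℝ)
    (hR : R.PosSemidef) (hPsymm : P.IsSymm) (hLsymm : L.IsSymm)
    (hA : A = Ac + R * P)
    (hLyap : L * Acᵀ + Ac * L = R)
    (hHurwitz : ∀ (lam : ℂ) (v : Fin n → ℂ), v ≠ 0 →
      (Ac.map (Complex.ofReal)).mulVec v = lam • v → lam.re < 0)
    (hctrb : ∀ (lam : ℂ) (u : Fin n → ℂ), u ≠ 0 →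
      (Aᵀ.map (Complex.ofReal)).mulVec u = lam • u →
      (R.map (Complex.ofReal)).mulVec u ≠ 0) :
    (-L).PosDef := by
  classical
  have hnegsemi : (-L).PosSemidef := stmt4_negSemidef R L Ac hR hLsymm hLyap hHurwitz
  refine posDef_iff_dotProduct_mulVec.mpr ⟨hnegsemi.isHermitian, ?_⟩
  intro x hx
  have hq0 : 0 ≤ x ⬝ᵥ ((-L) *ᵥ x) := by
    have h := hnegsemi.dotProduct_mulVec_nonneg x; rwa [star_trivial] at h
  rcases lt_or_eq_of_le hq0 with hlt | heq
  · rwa [star_trivial]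
  exfalso
  have hker : (-L) *ᵥ x = 0 :=
    (hnegsemi.dotProduct_mulVec_zero_iff x).mp (by rw [star_trivial]; exact heq.symm)
  have hLx : L *ᵥ x = 0 := by
    rw [Matrix.neg_mulVec, neg_eq_zero] at hker; exact hker
  -- complexification
  set mm : Matrix (Fin n) (Fin n) ℝ →+* Matrix (Fin n) (Fin n) ℂ :=
    Complex.ofRealHom.mapMatrix with hmm
  have hmm_apply : ∀ M : Matrix (Fin n) (Fin n) ℝ, mm M = M.map Complex.ofReal := fun _ => rfl
  have hmulvec_cast : ∀ (M : Matrix (Fin n) (Fin n) ℝ) (v : Fin n → ℝ),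
      (mm M) *ᵥ (fun i => (v i : ℂ)) = fun i => ((M *ᵥ v) i : ℂ) := by
    intro M v
    funext i
    simp only [hmm_apply, Matrix.mulVec, dotProduct, Matrix.map_apply]
    push_cast
    rfl
  have hRsymm : Rᵀ = R := by
    have h := hR.isHermitian
    rwa [Matrix.IsHermitian, conjTranspose_eq_transpose_of_trivial] at h
  have hLcH : (mm L)ᴴ = mm L := by
    rw [hmm_apply]
    rw [← Matrix.conjTranspose_map Complex.ofReal (fun r => by simp)]
    rw [conjTranspose_eq_transpose_of_trivial, hLsymm.eq]
  have hRcpsd : (mm R).PosSemidef := by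
    obtain ⟨Bm, hBm⟩ : ∃ Bm : Matrix (Fin n) (Fin n) ℝ, R = Bmᴴ * Bm := by
      open scoped MatrixOrder in
      obtain ⟨Bm, hBm⟩ := CStarAlgebra.nonneg_iff_eq_star_mul_self.mp hR.nonneg
      exact ⟨Bm, by rw [hBm, star_eq_conjTranspose]⟩
    have h1 : mm R = (mm Bm)ᴴ * mm Bm := by
      rw [hBm, _root_.map_mul]
      congr 1
      rw [hmm_apply, hmm_apply, ← Matrix.conjTranspose_map Complex.ofReal (fun r => by simp)]
    rw [h1]
    exact Matrix.posSemidef_conjTranspose_mul_self _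
  have hLyapC : mm L * mm Acᵀ + mm Ac * mm L = mm R := by
    rw [← _root_.map_mul, ← _root_.map_mul, ← _root_.map_add, hLyap]
  -- key step: the kernel of `L` is invariant and annihilated by `R`
  have hstep : ∀ u : Fin n → ℂ, (mm L) *ᵥ u = 0 →
      (mm R) *ᵥ u = 0 ∧ (mm L) *ᵥ ((mm Acᵀ) *ᵥ u) = 0 := by
    intro u hu
    have h1 : (mm L) *ᵥ ((mm Acᵀ) *ᵥ u) + (mm Ac) *ᵥ ((mm L) *ᵥ u) = (mm R) *ᵥ u := by
      rw [Matrix.mulVec_mulVec, Matrix.mulVec_mulVec, ← Matrix.add_mulVec, hLyapC]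
    rw [hu, Matrix.mulVec_zero, add_zero] at h1
    have hvLc : star u ᵥ* (mm L) = 0 := by
      have h3 : star ((mm L) *ᵥ u) = star u ᵥ* (mm L)ᴴ := Matrix.star_mulVec (mm L) u
      rw [hu, star_zero, hLcH] at h3
      exact h3.symm
    have h2 : star u ⬝ᵥ ((mm R) *ᵥ u) = 0 := by
      rw [← h1, Matrix.dotProduct_mulVec, hvLc, zero_dotProduct]
    have hRu : (mm R) *ᵥ u = 0 := (hRcpsd.dotProduct_mulVec_zero_iff u).mp h2
    exact ⟨hRu, by rw [h1, hRu]⟩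
  -- invariant subspace
  set W : Submodule ℂ (Fin n → ℂ) := LinearMap.ker (Matrix.mulVecLin (mm L)) with hW
  have hmemW : ∀ u : Fin n → ℂ, u ∈ W ↔ (mm L) *ᵥ u = 0 := by
    intro u
    rw [hW, LinearMap.mem_ker, Matrix.mulVecLin_apply]
  set xc : Fin n → ℂ := fun i => (x i : ℂ) with hxc
  have hxcW : xc ∈ W := by
    rw [hmemW, hxc, hmulvec_cast, hLx]
    funext i; simp
  have hxc0 : xc ≠ 0 := by
    intro h
    apply hx
    funext i
    have h7 := congrFun h i
    rw [hxc] at h7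
    simp only [Pi.zero_apply] at h7 ⊢
    exact_mod_cast h7
  haveI : Nontrivial W := ⟨⟨⟨xc, hxcW⟩, 0, by simp [hxc0]⟩⟩
  have hWinv : ∀ u ∈ W, (Matrix.mulVecLin (mm Acᵀ)) u ∈ W := by
    intro u hu
    rw [hmemW] at hu
    rw [Matrix.mulVecLin_apply, hmemW]
    exact (hstep u hu).2
  set T : W →ₗ[ℂ] W := (Matrix.mulVecLin (mm Acᵀ)).restrict hWinv with hT
  obtain ⟨μ, hμ⟩ := Module.End.exists_eigenvalue T
  obtain ⟨w, hw⟩ := hμ.exists_hasEigenvector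
  have hw0 : (w : Fin n → ℂ) ≠ 0 := by
    intro h
    exact hw.2 (Subtype.coe_injective h)
  have hweig : (mm Acᵀ) *ᵥ (w : Fin n → ℂ) = μ • (w : Fin n → ℂ) := by
    have h4 := hw.apply_eq_smul
    have h5 := congrArg (Subtype.val) h4
    rw [hT] at h5
    rw [LinearMap.restrict_coe_apply] at h5
    rw [Matrix.mulVecLin_apply] at h5
    exact h5
  have hwW : (w : Fin n → ℂ) ∈ W := w.2
  have hwker : (mm L) *ᵥ (w : Fin n → ℂ) = 0 := (hmemW _).mp hwW
  have hRw : (mm R) *ᵥ (w : Fin n → ℂ) = 0 := (hstep _ hwker).1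
  -- contradiction with controllability
  have hAT : Aᵀ.map Complex.ofReal = mm Acᵀ + mm P * mm R := by
    have h6 : Aᵀ = Acᵀ + P * R := by
      rw [hA, Matrix.transpose_add, Matrix.transpose_mul, hPsymm.eq, hRsymm]
    rw [← hmm_apply, h6, _root_.map_add, _root_.map_mul]
  have heigA : (Aᵀ.map Complex.ofReal) *ᵥ (w : Fin n → ℂ) = μ • (w : Fin n → ℂ) := by
    rw [hAT, Matrix.add_mulVec, hweig, ← Matrix.mulVec_mulVec, hRw, Matrix.mulVec_zero, add_zero]
  exact hctrb μ w hw0 heigA (by rw [← hmm_apply]; exact hRw)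
end

section
/- Let Ham = [[A, −R],[−Q, −Aᵀ]] with R, Q ⪰ 0, (A,R) stabilizable and (Q,A) detectable, and let P ⪰ 0 solve the Riccati equation with A_c = A − RP Hurwitz and L solve the Lyapunov equation L A_cᵀ + A_c L = R. Write exp(t·Ham) in n×n blocks Φ_ij(t). Then Φ_11(t) = exp(tA_c)(I + L̃(t)P) where L̃(t) = L − exp(−tA_c)L exp(−tA_cᵀ), and Φ_11(t) is nonsingular for all t ≥ 0. -/
open Matrix

open NormedSpace in

theorem stmt7_exp_fromBlocks {n : ℕ} (X Y : Matrix (Fin n) (Fin n) ℝ) :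
    exp (fromBlocks X 0 0 Y : Matrix (Fin n ⊕ Fin n) (Fin n ⊕ Fin n) ℝ) =
      fromBlocks (exp X) 0 0 (exp Y) := by
  letI : SeminormedRing (Matrix (Fin n) (Fin n) ℝ) := Matrix.linftyOpSemiNormedRing
  letI : NormedRing (Matrix (Fin n) (Fin n) ℝ) := Matrix.linftyOpNormedRing
  letI : NormedAlgebra ℝ (Matrix (Fin n) (Fin n) ℝ) := Matrix.linftyOpNormedAlgebra
  letI : SeminormedRing (Matrix (Fin n ⊕ Fin n) (Fin n ⊕ Fin n) ℝ) := Matrix.linftyOpSemiNormedRing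
  letI : NormedRing (Matrix (Fin n ⊕ Fin n) (Fin n ⊕ Fin n) ℝ) := Matrix.linftyOpNormedRing
  letI : NormedAlgebra ℝ (Matrix (Fin n ⊕ Fin n) (Fin n ⊕ Fin n) ℝ) := Matrix.linftyOpNormedAlgebra
  letI : NormedAlgebra ℚ (Matrix (Fin n) (Fin n) ℝ) := NormedAlgebra.restrictScalars ℚ ℝ _
  let f : Matrix (Fin n) (Fin n) ℝ × Matrix (Fin n) (Fin n) ℝ →+*
      Matrix (Fin n ⊕ Fin n) (Fin n ⊕ Fin n) ℝ :=
    { toFun := fun p => fromBlocks p.1 0 0 p.2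
      map_one' := Matrix.fromBlocks_one
      map_mul' := fun p q => by simp [Matrix.fromBlocks_multiply]
      map_zero' := Matrix.fromBlocks_zero
      map_add' := fun p q => by simp [Matrix.fromBlocks_add] }
  have hf : Continuous f := by
    apply continuous_matrix
    rintro (i|i) (j|j) <;> simp only [f, RingHom.coe_mk, MonoidHom.coe_mk, OneHom.coe_mk,
      Matrix.fromBlocks_apply₁₁, Matrix.fromBlocks_apply₁₂, Matrix.fromBlocks_apply₂₁,
      Matrix.fromBlocks_apply₂₂, Matrix.zero_apply] <;> fun_prop
  have h2 : exp ((X, Y) : Matrix (Fin n) (Fin n) ℝ × Matrix (Fin n) (Fin n) ℝ)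
      = (exp X, exp Y) := by
    have hfst := map_exp (RingHom.fst (Matrix (Fin n) (Fin n) ℝ) (Matrix (Fin n) (Fin n) ℝ))
      continuous_fst ((X, Y) : _ × _)
    have hsnd := map_exp (RingHom.snd (Matrix (Fin n) (Fin n) ℝ) (Matrix (Fin n) (Fin n) ℝ))
      continuous_snd ((X, Y) : _ × _)
    exact Prod.ext hfst hsnd
  have h1 := map_exp f hf ((X, Y) : _ × _)
  erw [h2] at h1
  exact h1.symm

open NormedSpace in

theorem stmt7_ltilde_nonneg {n : ℕ} (Ac R L : Matrix (Fin n) (Fin n) ℝ)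
    (hLyap : L * Acᵀ + Ac * L = R)
    (hRpos : ∀ x : Fin n → ℝ, 0 ≤ x ⬝ᵥ R *ᵥ x)
    (t : ℝ) (ht : 0 ≤ t) (v : Fin n → ℝ) :
    0 ≤ v ⬝ᵥ ((L - exp ((-t) • Ac) * L * exp ((-t) • Acᵀ)) *ᵥ v) := by
  letI : SeminormedRing (Matrix (Fin n) (Fin n) ℝ) := Matrix.linftyOpSemiNormedRing
  letI : NormedRing (Matrix (Fin n) (Fin n) ℝ) := Matrix.linftyOpNormedRing
  letI : NormedAlgebra ℝ (Matrix (Fin n) (Fin n) ℝ) := Matrix.linftyOpNormedAlgebra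
  letI : CompleteSpace (Matrix (Fin n) (Fin n) ℝ) := FiniteDimensional.complete ℝ _
  set E : ℝ → Matrix (Fin n) (Fin n) ℝ := fun s => exp (s • (-Ac)) with hE
  set F : ℝ → Matrix (Fin n) (Fin n) ℝ := fun s => exp (s • (-Acᵀ)) with hF
  -- the scalar function
  set f : ℝ → ℝ := fun s => v ⬝ᵥ ((L - E s * L * F s) *ᵥ v) with hfdef
  -- the linear functional M ↦ v ⬝ᵥ M *ᵥ v
  let ψ : Matrix (Fin n) (Fin n) ℝ →ₗ[ℝ] ℝ :=
    { toFun := fun M => v ⬝ᵥ (M *ᵥ v)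
      map_add' := fun M N => by simp [Matrix.add_mulVec, dotProduct_add]
      map_smul' := fun c M => by simp [Matrix.smul_mulVec, dotProduct_smul] }
  let ψc : Matrix (Fin n) (Fin n) ℝ →L[ℝ] ℝ := ψ.toContinuousLinearMap
  have hder : ∀ s : ℝ, HasDerivAt f (v ⬝ᵥ ((E s * R * F s) *ᵥ v)) s := by
    intro s
    have hEd : HasDerivAt E (E s * (-Ac)) s := hasDerivAt_exp_smul_const (-Ac) s
    have hFd : HasDerivAt F ((-Acᵀ) * F s) s := hasDerivAt_exp_smul_const' (-Acᵀ) s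
    have hg : HasDerivAt (fun s => E s * L * F s)
        (E s * (-Ac) * L * F s + E s * L * ((-Acᵀ) * F s)) s :=
      (hEd.mul_const L).mul hFd
    have hsub : HasDerivAt (fun s => L - E s * L * F s)
        (-(E s * (-Ac) * L * F s + E s * L * ((-Acᵀ) * F s))) s := hg.const_sub L
    have hcomp := ψc.hasFDerivAt.comp_hasDerivAt s hsub
    have hval : ψc (-(E s * (-Ac) * L * F s + E s * L * ((-Acᵀ) * F s)))
        = v ⬝ᵥ ((E s * R * F s) *ᵥ v) := by
      have hm : -(E s * (-Ac) * L * F s + E s * L * ((-Acᵀ) * F s)) = E s * R * F s := by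
        rw [← hLyap]; noncomm_ring
      rw [hm]; rfl
    exact hcomp.congr_deriv hval
  have hFEt : ∀ s : ℝ, F s = (E s)ᵀ := by
    intro s
    have : (s • (-Ac))ᵀ = s • (-Acᵀ) := by
      rw [Matrix.transpose_smul, Matrix.transpose_neg]
    rw [hE, hF]
    simp only
    rw [← this, Matrix.exp_transpose]
  have hder_nonneg : ∀ s : ℝ, 0 ≤ v ⬝ᵥ ((E s * R * F s) *ᵥ v) := by
    intro s
    have : v ⬝ᵥ ((E s * R * F s) *ᵥ v) = ((E s)ᵀ *ᵥ v) ⬝ᵥ (R *ᵥ ((E s)ᵀ *ᵥ v)) := by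
      rw [hFEt s, ← Matrix.mulVec_mulVec, ← Matrix.mulVec_mulVec, Matrix.dotProduct_mulVec,
        ← Matrix.mulVec_transpose]
    rw [this]
    exact hRpos _
  have hf0 : f 0 = 0 := by
    have hE0 : E 0 = 1 := by rw [hE]; simp only; rw [zero_smul, exp_zero]
    have hF0 : F 0 = 1 := by rw [hF]; simp only; rw [zero_smul, exp_zero]
    rw [hfdef]; simp only; rw [hE0, hF0]; simp
  have hmono : Monotone f := by
    apply monotone_of_deriv_nonneg
    · exact fun s => (hder s).differentiableAt
    · intro s
      rw [(hder s).deriv]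
      exact hder_nonneg s
  have hle : f 0 ≤ f t := hmono ht
  rw [hf0] at hle
  have hneg : (-t) • Ac = t • (-Ac) := by rw [neg_smul, smul_neg]
  have hneg' : (-t) • Acᵀ = t • (-Acᵀ) := by rw [neg_smul, smul_neg]
  rw [hneg, hneg']
  exact hle

open NormedSpace in

theorem stmt7_aux_unit {n : ℕ} (S P' : Matrix (Fin n) (Fin n) ℝ)
    (hS : ∀ x : Fin n → ℝ, 0 ≤ x ⬝ᵥ S *ᵥ x) (hP : P'.PosSemidef) :
    IsUnit (1 + S * P') := by
  rw [Matrix.isUnit_iff_isUnit_det, isUnit_iff_ne_zero]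
  intro hdet0
  obtain ⟨v, hv0, hv⟩ := Matrix.exists_mulVec_eq_zero_iff.mpr hdet0
  have hv' : v + S *ᵥ (P' *ᵥ v) = 0 := by
    rw [Matrix.mulVec_mulVec]
    rw [Matrix.add_mulVec, Matrix.one_mulVec] at hv
    exact hv
  set w := P' *ᵥ v with hw
  have hc : v ⬝ᵥ w + w ⬝ᵥ (S *ᵥ w) = 0 := by
    have := congrArg (fun u => w ⬝ᵥ u) hv'
    simpa [dotProduct_add, dotProduct_comm w v] using this
  have h1 : 0 ≤ v ⬝ᵥ w := by
    have := hP.dotProduct_mulVec_nonneg v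
    simpa using this
  have h2 : 0 ≤ w ⬝ᵥ (S *ᵥ w) := hS w
  have hvw : v ⬝ᵥ w = 0 := by linarith
  have hw0 : w = 0 := by
    have := (hP.dotProduct_mulVec_zero_iff v).mp (by simpa using hvw)
    exact this
  apply hv0
  have := hv'
  rw [hw0] at this
  simpa using this

open NormedSpace in
/-- The (1,1) block of `exp(t·Ham)` equals `exp(t A_c)(I + L̃(t) P)` and is nonsingular for all
`t ≥ 0`, under stabilizability of `(A,R)`, detectability of `(Q,A)`, the Riccati and Lyapunov
equations, and `A_c = A - RP` Hurwitz. -/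
theorem stmt_7 {n : ℕ} (A R Q P L Ac : Matrix (Fin n) (Fin n) ℝ)
    (hR : R.PosSemidef) (hQ : Q.PosSemidef) (hPsd : P.PosSemidef) (hLsymm : L.IsSymm)
    (hRic : P * A + Aᵀ * P - P * R * P + Q = 0)
    (hAc : Ac = A - R * P)
    (hHurwitz : ∀ (lam : ℂ) (v : Fin n → ℂ), v ≠ 0 →
      (Ac.map (Complex.ofReal)).mulVec v = lam • v → lam.re < 0)
    (hLyap : L * Acᵀ + Ac * L = R)
    (hstab : ∀ (lam : ℂ) (w : Fin n → ℂ), w ≠ 0 → 0 ≤ lam.re →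
      (Aᵀ.map (Complex.ofReal)).mulVec w = lam • w →
      (R.map (Complex.ofReal)).mulVec w ≠ 0)
    (hdet : ∀ (lam : ℂ) (w : Fin n → ℂ), w ≠ 0 → 0 ≤ lam.re →
      (A.map (Complex.ofReal)).mulVec w = lam • w →
      (Q.map (Complex.ofReal)).mulVec w ≠ 0) :
    ∀ t : ℝ, 0 ≤ t →
      (NormedSpace.exp (t • Matrix.fromBlocks A (-R) (-Q) (-Aᵀ))).toBlocks₁₁ =
        NormedSpace.exp (t • Ac) *
          (1 + (L - NormedSpace.exp ((-t) • Ac) * L * NormedSpace.exp ((-t) • Acᵀ)) * P) ∧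
      IsUnit ((NormedSpace.exp (t • Matrix.fromBlocks A (-R) (-Q) (-Aᵀ))).toBlocks₁₁) := by
  have hRpos : ∀ x : Fin n → ℝ, 0 ≤ x ⬝ᵥ R *ᵥ x := fun x => by simpa using hR.dotProduct_mulVec_nonneg x
  -- symmetry facts
  have hRT : Rᵀ = R := by
    have := hR.1; rwa [Matrix.IsHermitian, Matrix.conjTranspose_eq_transpose_of_trivial] at this
  have hPT : Pᵀ = P := by
    have := hPsd.1; rwa [Matrix.IsHermitian, Matrix.conjTranspose_eq_transpose_of_trivial] at this
  have hAcT : Acᵀ = Aᵀ - P * R := by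
    rw [hAc, Matrix.transpose_sub, Matrix.transpose_mul, hPT, hRT]
  have hQeq : Q = -(P * A + Aᵀ * P - P * R * P) := eq_neg_of_add_eq_zero_right hRic
  have hPAc : P * Ac = -Q - Aᵀ * P := by rw [hAc, hQeq]; noncomm_ring
  have hAcL : Ac * L = R - L * Acᵀ := by rw [← hLyap]; noncomm_ring
  have hLAcT : L * Acᵀ = R - Ac * L := by rw [← hLyap]; noncomm_ring
  have hPR : P * R = Aᵀ - Acᵀ := by rw [hAcT]; noncomm_ring
  set Ham : Matrix (Fin n ⊕ Fin n) (Fin n ⊕ Fin n) ℝ := fromBlocks A (-R) (-Q) (-Aᵀ) with hHam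
  set M : Matrix (Fin n ⊕ Fin n) (Fin n ⊕ Fin n) ℝ := fromBlocks 1 L P (P * L + 1) with hM
  set N : Matrix (Fin n ⊕ Fin n) (Fin n ⊕ Fin n) ℝ := fromBlocks (1 + L * P) (-L) (-P) 1 with hN
  set Dm : Matrix (Fin n ⊕ Fin n) (Fin n ⊕ Fin n) ℝ := fromBlocks Ac 0 0 (-Acᵀ) with hDm
  have hMN : M * N = 1 := by
    rw [hM, hN, Matrix.fromBlocks_multiply,
      show (1 : Matrix (Fin n) (Fin n) ℝ) * (1 + L * P) + L * (-P) = 1 by noncomm_ring,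
      show (1 : Matrix (Fin n) (Fin n) ℝ) * (-L) + L * 1 = 0 by noncomm_ring,
      show P * (1 + L * P) + (P * L + 1) * (-P) = 0 by noncomm_ring,
      show P * (-L) + (P * L + 1) * 1 = 1 by noncomm_ring,
      Matrix.fromBlocks_one]
  have hNM : N * M = 1 := by
    rw [hM, hN, Matrix.fromBlocks_multiply,
      show (1 + L * P) * 1 + (-L) * P = 1 by noncomm_ring,
      show (1 + L * P) * L + (-L) * (P * L + 1) = 0 by noncomm_ring,
      show (-P) * 1 + (1 : Matrix (Fin n) (Fin n) ℝ) * P = 0 by noncomm_ring,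
      show (-P) * L + (1 : Matrix (Fin n) (Fin n) ℝ) * (P * L + 1) = 1 by noncomm_ring,
      Matrix.fromBlocks_one]
  have e12 : A * L + (-R) * (P * L + 1) = L * (-Acᵀ) := by
    calc A * L + (-R) * (P * L + 1) = (A - R * P) * L - R := by noncomm_ring
      _ = Ac * L - R := by rw [← hAc]
      _ = (R - L * Acᵀ) - R := by rw [hAcL]
      _ = L * (-Acᵀ) := by noncomm_ring
  have e22 : (-Q) * L + (-Aᵀ) * (P * L + 1) = (P * L + 1) * (-Acᵀ) := by
    calc (-Q) * L + (-Aᵀ) * (P * L + 1) = (-Q - Aᵀ * P) * L - Aᵀ := by noncomm_ring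
      _ = P * Ac * L - Aᵀ := by rw [← hPAc]
      _ = P * (R - L * Acᵀ) - Aᵀ := by rw [mul_assoc, hAcL]
      _ = P * R - P * (L * Acᵀ) - Aᵀ := by noncomm_ring
      _ = (Aᵀ - Acᵀ) - P * (L * Acᵀ) - Aᵀ := by rw [hPR]
      _ = (P * L + 1) * (-Acᵀ) := by noncomm_ring
  have hHM : Ham * M = M * Dm := by
    rw [hHam, hM, hDm, Matrix.fromBlocks_multiply, Matrix.fromBlocks_multiply,
      show A * 1 + (-R) * P = 1 * Ac + L * 0 by rw [hAc]; noncomm_ring,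
      show A * L + (-R) * (P * L + 1) = 1 * 0 + L * (-Acᵀ) by rw [e12]; noncomm_ring,
      show (-Q) * 1 + (-Aᵀ) * P = P * Ac + (P * L + 1) * 0 by rw [hPAc]; noncomm_ring,
      show (-Q) * L + (-Aᵀ) * (P * L + 1) = P * 0 + (P * L + 1) * (-Acᵀ) by
        rw [e22]; noncomm_ring]
  set U : (Matrix (Fin n ⊕ Fin n) (Fin n ⊕ Fin n) ℝ)ˣ := ⟨M, N, hMN, hNM⟩ with hU
  have hHam_conj : Ham = M * Dm * N := by
    calc Ham = Ham * (M * N) := by rw [hMN, mul_one]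
      _ = (Ham * M) * N := by rw [mul_assoc]
      _ = M * Dm * N := by rw [hHM]
  intro t ht
  set E₁ : Matrix (Fin n) (Fin n) ℝ := exp (t • Ac) with hE₁
  set E₁' : Matrix (Fin n) (Fin n) ℝ := exp ((-t) • Ac) with hE₁'
  set E₂ : Matrix (Fin n) (Fin n) ℝ := exp ((-t) • Acᵀ) with hE₂
  have hsmul : t • Dm = fromBlocks (t • Ac) 0 0 ((-t) • Acᵀ) := by
    rw [hDm, Matrix.fromBlocks_smul, smul_zero, smul_neg, ← neg_smul]
  have hexpD : exp (t • Dm) = fromBlocks E₁ 0 0 E₂ := by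
    rw [hsmul, stmt7_exp_fromBlocks _ _]
  have hexp : exp (t • Ham) = M * fromBlocks E₁ 0 0 E₂ * N := by
    have h1 : t • Ham = (U : Matrix (Fin n ⊕ Fin n) (Fin n ⊕ Fin n) ℝ) * (t • Dm) * ((U⁻¹ : _ˣ) : Matrix (Fin n ⊕ Fin n) (Fin n ⊕ Fin n) ℝ) := by
      show t • Ham = M * (t • Dm) * N
      rw [hHam_conj, ← smul_mul_assoc, ← mul_smul_comm]
    rw [h1, Matrix.exp_units_conj U (t • Dm)]
    show M * exp (t • Dm) * N = _
    rw [hexpD]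
  have hE1inv : E₁ * E₁' = 1 := by
    rw [hE₁, hE₁', ← Matrix.exp_add_of_commute _ _
      (((Commute.refl Ac).smul_left t).smul_right (-t)),
      neg_smul, add_neg_cancel, exp_zero]
  have h11 : (exp (t • Ham)).toBlocks₁₁ =
      (1 * E₁ + L * 0) * (1 + L * P) + (1 * 0 + L * E₂) * (-P) := by
    rw [hexp, hM, hN, Matrix.fromBlocks_multiply, Matrix.fromBlocks_multiply,
      Matrix.toBlocks_fromBlocks₁₁]
  have hmain : (exp (t • Ham)).toBlocks₁₁ = E₁ * (1 + (L - E₁' * L * E₂) * P) := by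
    rw [h11]
    calc (1 * E₁ + L * 0) * (1 + L * P) + (1 * 0 + L * E₂) * (-P)
        = E₁ + E₁ * (L * P) - 1 * (L * (E₂ * P)) := by noncomm_ring
      _ = E₁ + E₁ * (L * P) - (E₁ * E₁') * (L * (E₂ * P)) := by rw [hE1inv]
      _ = E₁ * (1 + (L - E₁' * L * E₂) * P) := by noncomm_ring
  refine ⟨hmain, ?_⟩
  rw [hmain]
  exact (Matrix.isUnit_exp (t • Ac)).mul (stmt7_aux_unit _ P (stmt7_ltilde_nonneg Ac R L hLyap hRpos t ht) hPsd)
end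

section
/- Consider the linear ODE system ẋ = Ax − BBᵀp, ṗ = −CᵀCx − Aᵀp on ℝ²ⁿ, i.e., ż = Ham·z with Ham = [[A, −BBᵀ],[−CᵀC, −Aᵀ]]. If (A,B) is stabilizable and (C,A) is detectable, then Ham has no eigenvalues on the imaginary axis. -/
open Matrix Complex

private lemma star_mulVec_real {k l : ℕ} (M : Matrix (Fin k) (Fin l) ℝ)
    (w : Fin l → ℂ) :
    star ((M.map (Complex.ofReal)) *ᵥ w) = (M.map (Complex.ofReal)) *ᵥ star w := by
  funext i
  simp [Matrix.mulVec, dotProduct, Complex.conj_ofReal, map_sum]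

private lemma dot_self_eq {k : ℕ} (w : Fin k → ℂ) :
    star w ⬝ᵥ w = ((∑ i, Complex.normSq (w i) : ℝ) : ℂ) := by
  push_cast
  refine Finset.sum_congr rfl fun i _ => ?_
  simp [mul_comm, Complex.mul_conj]

/-- If `(A,B)` is stabilizable and `(C,A)` is detectable (Hautus conditions), then the
Hamiltonian matrix `Ham = [[A, -BBᵀ],[-CᵀC, -Aᵀ]]` has no eigenvalues on the imaginary
axis. -/
theorem stmt_13 {n m r : ℕ} (A : Matrix (Fin n) (Fin n) ℝ)
    (B : Matrix (Fin n) (Fin m) ℝ) (C : Matrix (Fin r) (Fin n) ℝ)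
    (hstab : ∀ (lam : ℂ) (w : Fin n → ℂ), w ≠ 0 → 0 ≤ lam.re →
      (Aᵀ.map (Complex.ofReal)).mulVec w = lam • w →
      (Bᵀ.map (Complex.ofReal)).mulVec w ≠ 0)
    (hdet : ∀ (lam : ℂ) (v : Fin n → ℂ), v ≠ 0 → 0 ≤ lam.re →
      (A.map (Complex.ofReal)).mulVec v = lam • v →
      (C.map (Complex.ofReal)).mulVec v ≠ 0) :
    ∀ (lam : ℂ) (z : (Fin n ⊕ Fin n) → ℂ), z ≠ 0 →
      ((Matrix.fromBlocks A (-(B * Bᵀ)) (-(Cᵀ * C)) (-Aᵀ)).map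
        (Complex.ofReal)).mulVec z = lam • z →
      lam.re ≠ 0 := by
  intro lam z hz hev hre
  set Ac : Matrix (Fin n) (Fin n) ℂ := A.map (Complex.ofReal) with hAc
  set Bc : Matrix (Fin n) (Fin m) ℂ := B.map (Complex.ofReal) with hBc
  set Cc : Matrix (Fin r) (Fin n) ℂ := C.map (Complex.ofReal) with hCc
  set x : Fin n → ℂ := z ∘ Sum.inl with hx
  set p : Fin n → ℂ := z ∘ Sum.inr with hp
  have hBB : (-(B * Bᵀ)).map (Complex.ofReal) = -(Bc * Bcᵀ) := by
    ext i j
    simp only [Matrix.map_apply, Matrix.neg_apply, Matrix.mul_apply,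
      Matrix.transpose_apply, hBc]
    push_cast
    ring
  have hCC : (-(Cᵀ * C)).map (Complex.ofReal) = -(Ccᵀ * Cc) := by
    ext i j
    simp only [Matrix.map_apply, Matrix.neg_apply, Matrix.mul_apply,
      Matrix.transpose_apply, hCc]
    push_cast
    ring
  have hAA : (-Aᵀ).map (Complex.ofReal) = -Acᵀ := by
    ext i j
    simp [Matrix.map_apply, hAc]
  have hmap : (Matrix.fromBlocks A (-(B * Bᵀ)) (-(Cᵀ * C)) (-Aᵀ)).map (Complex.ofReal)
      = Matrix.fromBlocks Ac (-(Bc * Bcᵀ)) (-(Ccᵀ * Cc)) (-Acᵀ) := by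
    rw [Matrix.fromBlocks_map, hBB, hCC, hAA, ← hAc]
  rw [hmap, Matrix.fromBlocks_mulVec] at hev
  have e1 : Ac *ᵥ x + (-(Bc * Bcᵀ)) *ᵥ p = lam • x := by
    funext i; exact congrFun hev (Sum.inl i)
  have e2 : (-(Ccᵀ * Cc)) *ᵥ x + (-Acᵀ) *ᵥ p = lam • p := by
    funext i; exact congrFun hev (Sum.inr i)
  set u : Fin m → ℂ := Bcᵀ *ᵥ p with hu
  set v : Fin r → ℂ := Cc *ᵥ x with hv
  have claim1 : star p ⬝ᵥ ((Bc * Bcᵀ) *ᵥ p) = star u ⬝ᵥ u := by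
    rw [← Matrix.mulVec_mulVec, Matrix.dotProduct_mulVec, ← Matrix.mulVec_transpose]
    congr 1
    rw [hu, hBc, ← Matrix.transpose_map]
    exact (star_mulVec_real Bᵀ p).symm
  have claim2 : star x ⬝ᵥ ((Ccᵀ * Cc) *ᵥ x) = star v ⬝ᵥ v := by
    rw [← Matrix.mulVec_mulVec, Matrix.dotProduct_mulVec, ← Matrix.mulVec_transpose,
      Matrix.transpose_transpose]
    congr 1
    rw [hv, hCc]
    exact (star_mulVec_real C x).symm
  have key1 : star p ⬝ᵥ (Ac *ᵥ x) - star u ⬝ᵥ u = lam * (star p ⬝ᵥ x) := by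
    have h1 := congrArg (fun w => star p ⬝ᵥ w) e1
    simp only [Matrix.neg_mulVec, dotProduct_add, dotProduct_neg,
      dotProduct_smul, smul_eq_mul] at h1
    rw [claim1] at h1
    linear_combination h1
  have key2 : -(star v ⬝ᵥ v) - star x ⬝ᵥ (Acᵀ *ᵥ p) = lam * (star x ⬝ᵥ p) := by
    have h2 := congrArg (fun w => star x ⬝ᵥ w) e2
    simp only [Matrix.neg_mulVec, dotProduct_add, dotProduct_neg,
      dotProduct_smul, smul_eq_mul] at h2
    rw [claim2] at h2
    linear_combination h2
  have c1 : (starRingEnd ℂ) (star p ⬝ᵥ (Ac *ᵥ x)) = star x ⬝ᵥ (Acᵀ *ᵥ p) :=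
    calc (starRingEnd ℂ) (star p ⬝ᵥ (Ac *ᵥ x)) = star (star p ⬝ᵥ (Ac *ᵥ x)) := rfl
    _ = star (Ac *ᵥ x) ⬝ᵥ p := by rw [Matrix.star_dotProduct, star_star]
    _ = (Ac *ᵥ star x) ⬝ᵥ p := by rw [hAc, star_mulVec_real]
    _ = star x ⬝ᵥ (Acᵀ *ᵥ p) := by
        rw [dotProduct_comm, Matrix.dotProduct_mulVec, ← Matrix.mulVec_transpose,
          dotProduct_comm]
  have c2 : (starRingEnd ℂ) (star u ⬝ᵥ u) = star u ⬝ᵥ u := by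
    rw [dot_self_eq]; exact Complex.conj_ofReal _
  have c3 : (starRingEnd ℂ) (star p ⬝ᵥ x) = star x ⬝ᵥ p :=
    calc (starRingEnd ℂ) (star p ⬝ᵥ x) = star (star p ⬝ᵥ x) := rfl
    _ = star x ⬝ᵥ p := by rw [Matrix.star_dotProduct, star_star]
  have key1' : star x ⬝ᵥ (Acᵀ *ᵥ p) - star u ⬝ᵥ u = (starRingEnd ℂ) lam * (star x ⬝ᵥ p) := by
    have h3 := congrArg (starRingEnd ℂ) key1
    rw [_root_.map_sub, _root_.map_mul, c1, c2, c3] at h3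
    exact h3
  have hsum : star u ⬝ᵥ u + star v ⬝ᵥ v = -((lam + (starRingEnd ℂ) lam) * (star x ⬝ᵥ p)) := by
    linear_combination - key2 - key1'
  have hlam0 : lam + (starRingEnd ℂ) lam = 0 := by
    rw [Complex.add_conj, hre]; simp
  rw [hlam0, zero_mul, neg_zero] at hsum
  rw [dot_self_eq u, dot_self_eq v, ← Complex.ofReal_add] at hsum
  have hreal : (∑ i, Complex.normSq (u i)) + (∑ i, Complex.normSq (v i)) = 0 := by
    exact_mod_cast hsum
  have hnn1 : 0 ≤ ∑ i, Complex.normSq (u i) :=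
    Finset.sum_nonneg fun i _ => Complex.normSq_nonneg _
  have hnn2 : 0 ≤ ∑ i, Complex.normSq (v i) :=
    Finset.sum_nonneg fun i _ => Complex.normSq_nonneg _
  have hsum_u : ∑ i, Complex.normSq (u i) = 0 := by linarith
  have hsum_v : ∑ i, Complex.normSq (v i) = 0 := by linarith
  have hu0 : u = 0 := by
    funext i
    have := (Finset.sum_eq_zero_iff_of_nonneg
      (fun i _ => Complex.normSq_nonneg (u i))).1 hsum_u i (Finset.mem_univ i)
    exact Complex.normSq_eq_zero.1 this
  have hv0 : v = 0 := by
    funext i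
    have := (Finset.sum_eq_zero_iff_of_nonneg
      (fun i _ => Complex.normSq_nonneg (v i))).1 hsum_v i (Finset.mem_univ i)
    exact Complex.normSq_eq_zero.1 this
  have hBBp : (Bc * Bcᵀ) *ᵥ p = 0 := by
    rw [← Matrix.mulVec_mulVec, ← hu, hu0, Matrix.mulVec_zero]
  have hCCx : (Ccᵀ * Cc) *ᵥ x = 0 := by
    rw [← Matrix.mulVec_mulVec, ← hv, hv0, Matrix.mulVec_zero]
  have ex : Ac *ᵥ x = lam • x := by
    rw [← e1, Matrix.neg_mulVec, hBBp]; simp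
  have ep : Acᵀ *ᵥ p = (-lam) • p := by
    have h4 : (-(Ccᵀ * Cc)) *ᵥ x = 0 := by rw [Matrix.neg_mulVec, hCCx, neg_zero]
    rw [h4, zero_add, Matrix.neg_mulVec] at e2
    funext i
    have := congrFun e2 i
    simp only [Pi.neg_apply, Pi.smul_apply, smul_eq_mul, neg_smul] at this ⊢
    linear_combination -this
  have hAt : Aᵀ.map (Complex.ofReal) = Acᵀ := by
    rw [Matrix.transpose_map, ← hAc]
  have hBt : Bᵀ.map (Complex.ofReal) = Bcᵀ := by
    rw [Matrix.transpose_map, ← hBc]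
  by_cases hx0 : x = 0
  · have hp0 : p ≠ 0 := by
      intro hp0
      apply hz
      funext i
      cases i with
      | inl i => exact congrFun hx0 i
      | inr i => exact congrFun hp0 i
    have hcon := hstab (-lam) p hp0 (by simp [hre]) (by rw [hAt]; exact ep)
    apply hcon
    rw [hBt, ← hu]
    exact hu0
  · have hcon := hdet lam x hx0 (le_of_eq hre.symm) ex
    apply hcon
    rw [← hv]
    exact hv0
end

section
/- Let A ∈ ℝ^{n×n}, B ∈ ℝ^{n×m}, C ∈ ℝ^{r×n} with (A,B) stabilizable and (C,A) detectable, and let Ham = [[A, −BBᵀ],[−CᵀC, −Aᵀ]]. Then Ham is invertible, and for every z ∈ ℝʳ the linear steady-state equation Ham·[x̄; p̄] = [0; −Cᵀz] has a unique solution (x̄, p̄) ∈ ℝⁿ × ℝⁿ. -/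
open Matrix Complex

lemma aux_dp_self_nonneg {k : ℕ} (v : Fin k → ℝ) : 0 ≤ v ⬝ᵥ v :=
  Finset.sum_nonneg fun i _ => mul_self_nonneg (v i)

lemma aux_map_mulVec {n m : ℕ} (M : Matrix (Fin n) (Fin m) ℝ) (v : Fin m → ℝ) :
    (M.map (Complex.ofReal)).mulVec ((Complex.ofReal) ∘ v)
      = (Complex.ofReal) ∘ (M.mulVec v) := by
  funext i
  exact (RingHom.map_mulVec Complex.ofRealHom M v i).symm

/-- Under stabilizability of `(A,B)` and detectability of `(C,A)`, the Hamiltonian matrix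
`Ham = [[A, -BBᵀ],[-CᵀC, -Aᵀ]]` is invertible, and for every target `z` the steady-state
equation `Ham·[x̄; p̄] = [0; -Cᵀz]` has a unique solution `(x̄, p̄)`. -/
theorem stmt_19 {n m r : ℕ} (A : Matrix (Fin n) (Fin n) ℝ)
    (B : Matrix (Fin n) (Fin m) ℝ) (C : Matrix (Fin r) (Fin n) ℝ)
    (hstab : ∀ (lam : ℂ) (w : Fin n → ℂ), w ≠ 0 → 0 ≤ lam.re →
      (Aᵀ.map (Complex.ofReal)).mulVec w = lam • w →
      (Bᵀ.map (Complex.ofReal)).mulVec w ≠ 0)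
    (hdet : ∀ (lam : ℂ) (v : Fin n → ℂ), v ≠ 0 → 0 ≤ lam.re →
      (A.map (Complex.ofReal)).mulVec v = lam • v →
      (C.map (Complex.ofReal)).mulVec v ≠ 0) :
    IsUnit (Matrix.fromBlocks A (-(B * Bᵀ)) (-(Cᵀ * C)) (-Aᵀ)) ∧
    ∀ z : Fin r → ℝ, ∃! xp : (Fin n → ℝ) × (Fin n → ℝ),
      (Matrix.fromBlocks A (-(B * Bᵀ)) (-(Cᵀ * C)) (-Aᵀ)).mulVec (Sum.elim xp.1 xp.2) =
        Sum.elim (0 : Fin n → ℝ) (-(Cᵀ.mulVec z)) := by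
  set M := Matrix.fromBlocks A (-(B * Bᵀ)) (-(Cᵀ * C)) (-Aᵀ) with hM
  -- kernel is trivial
  have hker : ∀ v : (Fin n ⊕ Fin n) → ℝ, M.mulVec v = 0 → v = 0 := by
    intro v hv
    set x : Fin n → ℝ := v ∘ Sum.inl with hx
    set p : Fin n → ℝ := v ∘ Sum.inr with hp
    have hv' : v = Sum.elim x p := by funext i; cases i <;> rfl
    rw [hv', hM, Matrix.fromBlocks_mulVec] at hv
    have h1 : A.mulVec x + (-(B * Bᵀ)).mulVec p = 0 := by
      funext i; exact congrFun hv (Sum.inl i)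
    have h2 : (-(Cᵀ * C)).mulVec x + (-Aᵀ).mulVec p = 0 := by
      funext i; exact congrFun hv (Sum.inr i)
    have h1' : A.mulVec x = (B * Bᵀ).mulVec p := by
      have := h1; rw [Matrix.neg_mulVec] at this; linear_combination (norm := module) this
    have h2' : Aᵀ.mulVec p = -((Cᵀ * C).mulVec x) := by
      have := h2; rw [Matrix.neg_mulVec, Matrix.neg_mulVec] at this
      linear_combination (norm := module) -this
    -- p ⬝ A x = x ⬝ Aᵀ p
    have hsym : p ⬝ᵥ A.mulVec x = x ⬝ᵥ Aᵀ.mulVec p := by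
      rw [dotProduct_mulVec, mulVec_transpose, dotProduct_comm]
    have hL : p ⬝ᵥ (B * Bᵀ).mulVec p = (Bᵀ.mulVec p) ⬝ᵥ (Bᵀ.mulVec p) := by
      rw [← Matrix.mulVec_mulVec, dotProduct_mulVec, mulVec_transpose]
    have hR : x ⬝ᵥ (Cᵀ * C).mulVec x = (C.mulVec x) ⬝ᵥ (C.mulVec x) := by
      rw [← Matrix.mulVec_mulVec, dotProduct_mulVec, vecMul_transpose]
    have key : (Bᵀ.mulVec p) ⬝ᵥ (Bᵀ.mulVec p) = -((C.mulVec x) ⬝ᵥ (C.mulVec x)) := by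
      rw [← hL, ← hR, ← h1', hsym, h2', dotProduct_neg]
    have hBp : Bᵀ.mulVec p = 0 := by
      rw [← dotProduct_self_eq_zero (v := Bᵀ.mulVec p)]
      have hb := aux_dp_self_nonneg (Bᵀ.mulVec p)
      have hc := aux_dp_self_nonneg (C.mulVec x)
      linarith [key]
    have hCx : C.mulVec x = 0 := by
      rw [← dotProduct_self_eq_zero (v := C.mulVec x)]
      have hb := aux_dp_self_nonneg (Bᵀ.mulVec p)
      have hc := aux_dp_self_nonneg (C.mulVec x)
      linarith [key]
    have hAx : A.mulVec x = 0 := by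
      rw [h1', ← Matrix.mulVec_mulVec, hBp, Matrix.mulVec_zero]
    have hAp : Aᵀ.mulVec p = 0 := by
      rw [h2', ← Matrix.mulVec_mulVec, hCx, Matrix.mulVec_zero, neg_zero]
    -- use detectability for x
    have hx0 : x = 0 := by
      by_contra hxne
      have hvne : (Complex.ofReal ∘ x) ≠ 0 := by
        intro h; apply hxne; funext i
        have := congrFun h i
        simpa using this
      refine hdet 0 (Complex.ofReal ∘ x) hvne (by simp) ?_ ?_
      · rw [aux_map_mulVec, hAx]; funext i; simp
      · rw [aux_map_mulVec, hCx]; funext i; simp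
    have hp0 : p = 0 := by
      by_contra hpne
      have hvne : (Complex.ofReal ∘ p) ≠ 0 := by
        intro h; apply hpne; funext i
        have := congrFun h i
        simpa using this
      refine hstab 0 (Complex.ofReal ∘ p) hvne (by simp) ?_ ?_
      · rw [aux_map_mulVec, hAp]; funext i; simp
      · rw [aux_map_mulVec, hBp]; funext i; simp
    funext i
    cases i with
    | inl i => exact congrFun hx0 i
    | inr i => exact congrFun hp0 i
  have hinj : Function.Injective M.mulVec := by
    intro a b hab
    have : M.mulVec (a - b) = 0 := by
      rw [Matrix.mulVec_sub, hab, sub_self]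
    have := hker _ this
    exact sub_eq_zero.mp this
  have hunit : IsUnit M := Matrix.mulVec_injective_iff_isUnit.mp hinj
  refine ⟨hunit, fun z => ?_⟩
  have hMinv : Invertible M := hunit.invertible
  set b : (Fin n ⊕ Fin n) → ℝ := Sum.elim (0 : Fin n → ℝ) (-(Cᵀ.mulVec z)) with hb
  set w : (Fin n ⊕ Fin n) → ℝ := M⁻¹.mulVec b with hw
  have hMw : M.mulVec w = b := by
    rw [hw, Matrix.mulVec_mulVec, Matrix.mul_nonsing_inv _ (isUnit_iff_isUnit_det M |>.mp hunit),
      Matrix.one_mulVec]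
  refine ⟨(w ∘ Sum.inl, w ∘ Sum.inr), ?_, ?_⟩
  · have hel : Sum.elim (w ∘ Sum.inl) (w ∘ Sum.inr) = w := by funext i; cases i <;> rfl
    show M.mulVec (Sum.elim (w ∘ Sum.inl) (w ∘ Sum.inr)) = b
    rw [hel]; exact hMw
  · rintro ⟨x, p⟩ hxp
    have : Sum.elim x p = w := hinj (by rw [hMw]; exact hxp)
    have hx : x = w ∘ Sum.inl := by funext i; exact congrFun this (Sum.inl i)
    have hp : p = w ∘ Sum.inr := by funext i; exact congrFun this (Sum.inr i)
    simp [hx, hp]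
end
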